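/- arXiv:1512.00779 — 2 statements merged into one kernel-verified Lean document; each statement's English description precedes it below -/
import Mathlib

section
/- Let k be a positive integer and let W_1, …, W_{2k} be the dipole words defined by W_{2a−1} = ⋄^{2k+5} 1 1 (⋄1)^{a−1} (1⋄) (⋄1)^{k−a} 1 ⋄^{2k+6} and W_{2a} = 1^{2k+6} 0 (⋄⋄)^{k−a} (1⋄) (⋄⋄)^{a−1} ⋄ ⋄ 1^{2k+5} for a ∈ {1,…,k}. If i, j ∈ {1,…,2k} have the same parity (both odd or both even), then f(W_i, Rev(W_j)) ≤ 0. -/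
/-- The alphabet Σ = {0, 1, ⋄} of dipole letters. -/
inductive Dip : Type
  | zero : Dip
  | one : Dip
  | blank : Dip
  deriving DecidableEq

open Dip

/-- The force between a pair of letters: 1 if {x,y} = {0,1}, -1 if x = y ∈ {0,1}, 0 otherwise. -/
def lf : Dip → Dip → ℤ
  | zero, one => 1
  | one, zero => 1
  | zero, zero => -1
  | one, one => -1
  | _, _ => 0

/-- The force between a pair of equal-length words: the sum of letterwise forces. -/
def force (X Y : List Dip) : ℤ := (List.zipWith lf X Y).sum

/-- `n` repetitions of a letter. -/
def rep (n : ℕ) (x : Dip) : List Dip := List.replicate n x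

/-- `n` repetitions of a word. -/
def rep2 (n : ℕ) (p : List Dip) : List Dip := (List.replicate n p).flatten

/-- `W_{2a-1} = ⋄^{2k+5} 1 1 (⋄1)^{a-1} (1⋄) (⋄1)^{k-a} 1 ⋄^{2k+6}`. -/
def Wodd (k a : ℕ) : List Dip :=
  rep (2 * k + 5) blank ++ [one, one] ++ rep2 (a - 1) [blank, one] ++ [one, blank] ++
    rep2 (k - a) [blank, one] ++ [one] ++ rep (2 * k + 6) blank

/-- `W_{2a} = 1^{2k+6} 0 (⋄⋄)^{k-a} (1⋄) (⋄⋄)^{a-1} ⋄ ⋄ 1^{2k+5}`. -/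
def Weven (k a : ℕ) : List Dip :=
  rep (2 * k + 6) one ++ [zero] ++ rep2 (k - a) [blank, blank] ++ [one, blank] ++
    rep2 (a - 1) [blank, blank] ++ [blank, blank] ++ rep (2 * k + 5) one

/-- The word `W i`: `Wodd k a` for `i = 2a-1` odd, `Weven k a` for `i = 2a` even. -/
def Wgen (k i : ℕ) : List Dip :=
  if i % 2 = 1 then Wodd k ((i + 1) / 2) else Weven k (i / 2)

/- ------------------ auxiliary lemmas ------------------ -/

lemma lf_nonpos {x y : Dip} (hx : x ≠ zero) (hy : y ≠ zero) : lf x y ≤ 0 := by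
  cases x <;> cases y <;> simp_all [lf]

lemma lf_blank_right (x : Dip) : lf x blank = 0 := by cases x <;> rfl
lemma lf_blank_left (y : Dip) : lf blank y = 0 := by cases y <;> rfl

lemma force_nonpos {X Y : List Dip} (h : ∀ p ∈ X.zip Y, lf p.1 p.2 ≤ 0) : force X Y ≤ 0 := by
  induction X generalizing Y with
  | nil => simp [force]
  | cons x X ih =>
    cases Y with
    | nil => simp [force]
    | cons y Y =>
      have h1 := h (x, y) (by simp)
      have h2 : force X Y ≤ 0 := ih fun p hp => h p (by simp [hp])
      simp only [force, List.zipWith_cons_cons, List.sum_cons] at *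
      omega

lemma force_no_zero {X Y : List Dip} (hX : zero ∉ X) (hY : zero ∉ Y) : force X Y ≤ 0 :=
  force_nonpos fun p hp =>
    lf_nonpos (fun e => hX (e ▸ (List.of_mem_zip hp).1)) (fun e => hY (e ▸ (List.of_mem_zip hp).2))

lemma force_blank_right (X : List Dip) (n : ℕ) : force X (rep n blank) ≤ 0 :=
  force_nonpos fun p hp => by
    have := (List.of_mem_zip hp).2
    rw [rep, List.mem_replicate] at this
    rw [this.2, lf_blank_right]

lemma force_blank_left (Y : List Dip) (n : ℕ) : force (rep n blank) Y ≤ 0 :=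
  force_nonpos fun p hp => by
    have := (List.of_mem_zip hp).1
    rw [rep, List.mem_replicate] at this
    rw [this.2, lf_blank_left]

lemma force_append {A B C D : List Dip} (h : A.length = C.length) :
    force (A ++ B) (C ++ D) = force A C + force B D := by
  simp [force, List.zipWith_append h]

lemma cons_rep_comm (n : ℕ) (x : Dip) (l : List Dip) :
    x :: (List.replicate n x ++ l) = List.replicate n x ++ x :: l := by
  rw [← List.cons_append, ← List.replicate_succ, List.replicate_succ', List.append_assoc,
    List.singleton_append]

lemma rep2_pair (n : ℕ) (x : Dip) : rep2 n [x, x] = rep (2 * n) x := by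
  induction n with
  | zero => rfl
  | succ m ih =>
    have h : 2 * (m + 1) = 2 + 2 * m := by ring
    simp only [rep2, rep, List.replicate_succ, List.flatten_cons] at *
    simp [h, ih, List.replicate_add, List.replicate_succ]

def MidA (k a : ℕ) : List Dip := rep (2 * (k - a)) blank ++ ([one] ++ rep (2 * a - 1) blank)
def MidB (k b : ℕ) : List Dip := rep (2 * b - 1) blank ++ ([one] ++ rep (2 * (k - b)) blank)

lemma weven_block (k a : ℕ) (h1 : 1 ≤ a) :
    Weven k a = rep (2 * k + 5) one ++
      ([one, zero] ++ (MidA k a ++ (rep 2 blank ++ rep (2 * k + 5) one))) := by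
  obtain ⟨a', rfl⟩ : ∃ a', a = a' + 1 := ⟨a - 1, by omega⟩
  have e1 : 2 * k + 6 = (2 * k + 5) + 1 := by ring
  have e2 : 2 * (a' + 1) - 1 = 2 * a' + 1 := by omega
  simp only [Weven, MidA, rep2_pair, rep, e1, e2, Nat.add_sub_cancel,
    List.replicate_succ', List.replicate_add, List.append_assoc]
  simp [List.replicate_succ, cons_rep_comm]

lemma weven_rev_block (k b : ℕ) (h1 : 1 ≤ b) :
    (Weven k b).reverse = rep (2 * k + 5) one ++
      (rep 2 blank ++ (MidB k b ++ ([zero, one] ++ rep (2 * k + 5) one))) := by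
  rw [weven_block k b h1]
  simp [MidA, MidB, rep, List.reverse_append, List.append_assoc]

lemma zero_not_mem_wodd (k a : ℕ) : zero ∉ Wodd k a := by
  intro h
  simp only [Wodd, rep, rep2, List.mem_append, List.mem_replicate, List.mem_flatten,
    List.mem_cons, List.mem_singleton, List.not_mem_nil] at h
  rcases h with ((((((h | h) | h) | h) | h) | h) | h) <;> simp_all

lemma odd_case (k a b : ℕ) : force (Wodd k a) (Wodd k b).reverse ≤ 0 :=
  force_no_zero (zero_not_mem_wodd k a)
    (by rw [List.mem_reverse]; exact zero_not_mem_wodd k b)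

lemma even_case (k a b : ℕ) (ha1 : 1 ≤ a) (ha2 : a ≤ k) (hb1 : 1 ≤ b) (hb2 : b ≤ k) :
    force (Weven k a) (Weven k b).reverse ≤ 0 := by
  rw [weven_block k a ha1, weven_rev_block k b hb1]
  rw [force_append (by simp [rep]), force_append (by simp [rep]),
    force_append (by simp [MidA, MidB, rep]; omega), force_append (by simp [rep])]
  have t1 : force (rep (2 * k + 5) one) (rep (2 * k + 5) one) ≤ 0 :=
    force_no_zero (by simp [rep]) (by simp [rep])
  have t2 : force [one, zero] (rep 2 blank) ≤ 0 := force_blank_right _ _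
  have t3 : force (MidA k a) (MidB k b) ≤ 0 :=
    force_no_zero (by simp [MidA, rep]) (by simp [MidB, rep])
  have t4 : force (rep 2 blank) [zero, one] ≤ 0 := force_blank_left _ _
  omega

/-- Same-parity pairs of the warmup words have non-positive force. -/
theorem stmt9 (k : ℕ) (hk : 0 < k) :
    ∀ i ∈ Finset.Icc 1 (2 * k), ∀ j ∈ Finset.Icc 1 (2 * k), i % 2 = j % 2 →
      force (Wgen k i) ((Wgen k j).reverse) ≤ 0 := by
  intro i hi j hj hpar
  simp only [Finset.mem_Icc] at hi hj
  unfold Wgen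
  rcases Nat.mod_two_eq_zero_or_one i with h | h
  · rw [if_neg (by omega), if_neg (by omega)]
    exact even_case k (i / 2) (j / 2) (by omega) (by omega) (by omega) (by omega)
  · rw [if_pos h, if_pos (by omega)]
    exact odd_case k _ _
end

section
/- Let k be a positive integer divisible by 4. Define α(0) = 1⋄, α(1) = ⋄1, β(0) = 1⋄, β(1) = 0⋄, and for a bit word C of length k let M_{α,C} = α(C[1]) α(C[2]) ⋯ α(C[k]) and M_{β,C} = β(C[1]) β(C[2]) ⋯ β(C[k]). Then for all bit words C, D of length k each containing exactly k/2 ones: f(M_{α,C}, Rev(M_{β,Rev(D)})) = k/2 if C = D, and f(M_{α,C}, Rev(M_{β,Rev(D)})) ≤ k/2 − 2 if C ≠ D. -/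
open Dip

/-- `α(0) = 1⋄`, `α(1) = ⋄1`. -/
def amap : Bool → List Dip
  | false => [one, blank]
  | true => [blank, one]

/-- `β(0) = 1⋄`, `β(1) = 0⋄`. -/
def bmap : Bool → List Dip
  | false => [one, blank]
  | true => [zero, blank]

/-- `M_{α,C} = α(C[1]) α(C[2]) ⋯ α(C[k])`. -/
def MA (C : List Bool) : List Dip := (C.map amap).flatten

/-- `M_{β,C} = β(C[1]) β(C[2]) ⋯ β(C[k])`. -/
def MB (C : List Bool) : List Dip := (C.map bmap).flatten

lemma force_append_s14 (X1 X2 Y1 Y2 : List Dip) (h : X1.length = Y1.length) :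
    force (X1 ++ X2) (Y1 ++ Y2) = force X1 Y1 + force X2 Y2 := by
  simp [force, List.zipWith_append h]

lemma force_main : ∀ C D : List Bool, C.length = D.length →
    force (MA C) ((MB D.reverse).reverse) =
      2 * ((List.zipWith (· && ·) C D).count true : ℤ) - (C.count true : ℤ) := by
  intro C
  induction C with
  | nil =>
    intro D h
    have : D = [] := by cases D <;> simp_all
    subst this; simp [force, MA, MB]
  | cons c C ih =>
    intro D h
    cases D with
    | nil => simp at h
    | cons d D =>
      simp only [List.length_cons, Nat.succ_inj] at h
      have hA : MA (c :: C) = amap c ++ MA C := by simp [MA]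
      have hB : ((MB (d :: D).reverse).reverse) = (bmap d).reverse ++ (MB D.reverse).reverse := by
        simp [MB]
      rw [hA, hB, force_append_s14 _ _ _ _ (by cases c <;> cases d <;> simp [amap, bmap]), ih D h]
      cases c <;> cases d <;>
        simp [force, amap, bmap, lf, List.count_cons] <;> ring

lemma N_le_left : ∀ C D : List Bool,
    (List.zipWith (· && ·) C D).count true ≤ C.count true := by
  intro C
  induction C with
  | nil => intro D; simp
  | cons c C ih =>
    intro D
    cases D with
    | nil => simp
    | cons d D =>
      have := ih D
      cases c <;> cases d <;> simp [List.count_cons] <;> omega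

lemma N_le_right : ∀ C D : List Bool,
    (List.zipWith (· && ·) C D).count true ≤ D.count true := by
  intro C
  induction C with
  | nil => intro D; simp
  | cons c C ih =>
    intro D
    cases D with
    | nil => simp
    | cons d D =>
      have := ih D
      cases c <;> cases d <;> simp [List.count_cons] <;> omega

lemma eq_of_N : ∀ C D : List Bool, C.length = D.length →
    (List.zipWith (· && ·) C D).count true = C.count true →
    (List.zipWith (· && ·) C D).count true = D.count true → C = D := by
  intro C
  induction C with
  | nil =>
    intro D h _ _
    cases D <;> simp_all
  | cons c C ih =>
    intro D h h1 h2
    cases D with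
    | nil => simp at h
    | cons d D =>
      simp only [List.length_cons, Nat.succ_inj] at h
      have l1 := N_le_left C D
      have l2 := N_le_right C D
      cases c <;> cases d <;>
          simp [List.count_cons] at h1 h2
      · exact congrArg (List.cons false) (ih D h h1 h2)
      · omega
      · omega
      · exact congrArg (List.cons true) (ih D h (by omega) (by omega))

/-- For balanced bit words `C`, `D` of length `k` (with `4 ∣ k`):
`f(M_{α,C}, Rev(M_{β,Rev(D)}))` equals `k/2` if `C = D` and is at most `k/2 - 2`
otherwise. -/
theorem stmt14 (k : ℕ) (hk : 0 < k) (h4 : 4 ∣ k) (C D : List Bool)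
    (hC : C.length = k) (hD : D.length = k)
    (hCc : C.count true = k / 2) (hDc : D.count true = k / 2) :
    (C = D → force (MA C) ((MB D.reverse).reverse) = ((k / 2 : ℕ) : ℤ)) ∧
    (C ≠ D → force (MA C) ((MB D.reverse).reverse) ≤ ((k / 2 : ℕ) : ℤ) - 2) := by
  obtain ⟨m, rfl⟩ := h4
  have hlen : C.length = D.length := by omega
  have hf := force_main C D hlen
  set N := (List.zipWith (· && ·) C D).count true with hN
  constructor
  · rintro rfl
    have hNN : N = C.count true := by
      rw [hN, List.zipWith_self]
      simp
    rw [hf, hNN, hCc]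
    have : (4 * m) / 2 = 2 * m := by omega
    rw [this]; push_cast; ring
  · intro hne
    have h1 := N_le_left C D
    have h2 := N_le_right C D
    have hNe : N ≠ C.count true := by
      intro hEq
      exact hne (eq_of_N C D hlen hEq (by omega))
    rw [hf, hCc]
    have : (4 * m) / 2 = 2 * m := by omega
    rw [this]
    have hm : 0 < m := by omega
    have : N < 2 * m := by omega
    push_cast
    omega
end
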